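/- arXiv:2503.08380 — 2 statements merged into one kernel-verified Lean document; each statement's English description precedes it below -/
import Mathlib

section
/- For a nonnegative integer n and positive integers a, b, one has (b,b) ⧢̃ ({a}^n) = ∑_{i,j≥0, i+j≤n} (-1)^{i+j} (ai+b, aj+b) * ({a}^{n-i-j}) in 𝓘. -/
/-- Indices: finite sequences of positive integers (modeled as lists of naturals). -/
abbrev Idx := List ℕ

/-- The ℚ-vector space 𝓘 on the set of indices. -/
abbrev Ical := Idx →₀ ℚ

/-- Auxiliary harmonic product on reversed lists (cons = append at the end). -/
noncomputable def harmAux : Idx → Idx → Ical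
  | [], l => Finsupp.single l 1
  | a :: k, [] => Finsupp.single (a :: k) 1
  | a :: k, b :: l =>
      Finsupp.mapDomain (a :: ·) (harmAux k (b :: l)) +
      Finsupp.mapDomain (b :: ·) (harmAux (a :: k) l) +
      Finsupp.mapDomain ((a + b) :: ·) (harmAux k l)
termination_by k l => k.length + l.length

/-- The harmonic (stuffle) product of two indices. -/
noncomputable def harm (k l : Idx) : Ical :=
  Finsupp.mapDomain List.reverse (harmAux k.reverse l.reverse)

/-- Bilinear extension of the harmonic product to 𝓘. -/
noncomputable def harmF (x y : Ical) : Ical :=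
  x.sum fun k c => y.sum fun l d => (c * d) • harm k l

/-- The map σₙ on indices. -/
noncomputable def sigma : ℕ → Idx → Ical
  | n, [] => if n = 0 then Finsupp.single [] 1 else 0
  | n, k :: ks =>
      ∑ a ∈ Finset.range (n + 1),
        ((k + a - 1).choose a : ℚ) •
          Finsupp.mapDomain (fun t => (k + a) :: t) (sigma (n - a) ks)

/-- Linear extension of σₙ to 𝓘. -/
noncomputable def sigmaL (n : ℕ) (x : Ical) : Ical :=
  x.sum fun k c => c • sigma n k

/-- The map ₘIₙ on indices. -/
noncomputable def mI (m n : ℕ) (ks : Idx) : Ical :=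
  ∑ i ∈ Finset.range (ks.length + 1),
    ((-1 : ℚ)) ^ ((ks.drop i).sum) •
      harmF (sigma m (ks.take i)) (sigma n ((ks.drop i).reverse))

/-- The index shuffle product ⧢̃ of two indices. -/
noncomputable def sh : Idx → Idx → Ical
  | [], l => Finsupp.single l 1
  | a :: k, [] => Finsupp.single (a :: k) 1
  | a :: k, b :: l =>
      Finsupp.mapDomain (a :: ·) (sh k (b :: l)) +
      Finsupp.mapDomain (b :: ·) (sh (a :: k) l)
termination_by k l => k.length + l.length

/-- The multiple zeta value of an index. -/
noncomputable def mzv (ks : List ℕ) : ℝ :=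
  ∑' f : {f : Fin ks.length → ℕ // StrictMono f ∧ ∀ i, 0 < f i},
    ∏ i, (1 / (f.1 i : ℝ) ^ ks.get i)

noncomputable def eA (t : ℕ) : Ical →ₗ[ℚ] Ical :=
  Finsupp.lmapDomain ℚ ℚ (fun s => s ++ [t])

lemma eA_apply (t : ℕ) (u : Ical) :
    eA t u = Finsupp.mapDomain (fun s => s ++ [t]) u := rfl

lemma eA_single (t : ℕ) (L : Idx) :
    eA t (Finsupp.single L 1) = Finsupp.single (L ++ [t]) 1 := by
  simp [eA_apply, Finsupp.mapDomain_single]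

lemma cons_eA (c t : ℕ) (u : Ical) :
    Finsupp.mapDomain (c :: ·) (eA t u) = eA t (Finsupp.mapDomain (c :: ·) u) := by
  rw [eA_apply, eA_apply, ← Finsupp.mapDomain_comp, ← Finsupp.mapDomain_comp]
  rfl

lemma rev_cons (x : ℕ) (u : Ical) :
    Finsupp.mapDomain List.reverse (Finsupp.mapDomain (x :: ·) u)
      = eA x (Finsupp.mapDomain List.reverse u) := by
  rw [eA_apply, ← Finsupp.mapDomain_comp, ← Finsupp.mapDomain_comp]
  congr 1
  funext s
  simp

lemma harmAux_nil_right (k : Idx) : harmAux k [] = Finsupp.single k 1 := by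
  cases k <;> simp [harmAux]

lemma harm_nil_right (k : Idx) : harm k [] = Finsupp.single k 1 := by
  simp [harm, harmAux_nil_right, Finsupp.mapDomain_single]

lemma harm_nil_left (l : Idx) : harm [] l = Finsupp.single l 1 := by
  simp [harm, harmAux, Finsupp.mapDomain_single]

lemma harm_end (k l : Idx) (x y : ℕ) :
    harm (k ++ [x]) (l ++ [y])
      = eA x (harm k (l ++ [y])) + eA y (harm (k ++ [x]) l) + eA (x + y) (harm k l) := by
  simp only [harm, List.reverse_append, List.reverse_cons, List.reverse_nil,
    List.nil_append, List.cons_append, List.singleton_append]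
  rw [show harmAux (x :: k.reverse) (y :: l.reverse)
      = Finsupp.mapDomain (x :: ·) (harmAux k.reverse (y :: l.reverse)) +
        Finsupp.mapDomain (y :: ·) (harmAux (x :: k.reverse) l.reverse) +
        Finsupp.mapDomain ((x + y) :: ·) (harmAux k.reverse l.reverse) from by
        rw [harmAux]]
  rw [Finsupp.mapDomain_add, Finsupp.mapDomain_add, rev_cons, rev_cons, rev_cons]
lemma sh_nil_right (k : Idx) : sh k [] = Finsupp.single k 1 := by
  cases k <;> simp [sh]

lemma sh_cons_cons (x y : ℕ) (k l : Idx) :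
    sh (x :: k) (y :: l)
      = Finsupp.mapDomain (x :: ·) (sh k (y :: l)) +
        Finsupp.mapDomain (y :: ·) (sh (x :: k) l) := by
  rw [sh]

theorem sh_end (k l : Idx) (x y : ℕ) :
    sh (k ++ [x]) (l ++ [y])
      = eA x (sh k (l ++ [y])) + eA y (sh (k ++ [x]) l) := by
  match k, l with
  | [], [] =>
      simp only [List.nil_append, sh_cons_cons, sh, sh_nil_right,
        Finsupp.mapDomain_single, eA_single, List.singleton_append]
      abel
  | [], b :: l' =>
      have ih := sh_end [] l' x y
      simp only [List.nil_append, List.cons_append] at ih ⊢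
      rw [sh_cons_cons, ih]
      simp only [sh_cons_cons x b [] l', sh, sh_nil_right, map_add,
        Finsupp.mapDomain_add, cons_eA, Finsupp.mapDomain_single, eA_single,
        List.cons_append, List.append_assoc, List.nil_append,
        List.singleton_append]
      abel
  | a :: k', [] =>
      have ih := sh_end k' [] x y
      simp only [List.nil_append, List.cons_append] at ih ⊢
      rw [sh_cons_cons, ih]
      simp only [sh_cons_cons a y k' [], sh_nil_right, map_add,
        Finsupp.mapDomain_add, cons_eA, Finsupp.mapDomain_single, eA_single,
        List.cons_append, List.append_assoc, List.nil_append,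
        List.singleton_append]
      abel
  | a :: k', b :: l' =>
      have ih1 := sh_end k' (b :: l') x y
      have ih2 := sh_end (a :: k') l' x y
      simp only [List.cons_append] at ih1 ih2 ⊢
      rw [sh_cons_cons, ih1, ih2]
      simp only [sh_cons_cons a b k' (l' ++ [y]), sh_cons_cons a b (k' ++ [x]) l',
        map_add, Finsupp.mapDomain_add, cons_eA]
      abel
termination_by k.length + l.length
lemma sh_nil_left (l : Idx) : sh [] l = Finsupp.single l 1 := by rw [sh]

lemma sh_single_rep (a b n : ℕ) :
    sh [b] (List.replicate n a)
      = ∑ i ∈ Finset.range (n + 1),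
          (-1 : ℚ) ^ i • harm [a * i + b] (List.replicate (n - i) a) := by
  induction n with
  | zero => simp [sh_nil_right, harm_nil_right]
  | succ n ih =>
    set u : ℕ → Ical := fun i =>
      (-1 : ℚ) ^ i • Finsupp.single (List.replicate (n + 1 - i) a ++ [a * i + b]) 1 with hu
    have key : sh [b] (List.replicate (n + 1) a)
        = u 0 + eA a (sh [b] (List.replicate n a)) := by
      conv_lhs => rw [List.replicate_succ']
      rw [show ([b] : Idx) = [] ++ [b] from rfl, sh_end, sh_nil_left]
      simp [hu, eA_apply, Finsupp.mapDomain_single, List.replicate_succ']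
    have expand : ∀ i ∈ Finset.range (n + 1),
        (-1 : ℚ) ^ i • harm [a * i + b] (List.replicate (n + 1 - i) a)
          = (u i - u (i + 1))
            + eA a ((-1 : ℚ) ^ i • harm [a * i + b] (List.replicate (n - i) a)) := by
      intro i hi
      have hin : i ≤ n := Nat.lt_succ_iff.mp (Finset.mem_range.mp hi)
      have h1 : n + 1 - i = (n - i) + 1 := by omega
      rw [h1, List.replicate_succ',
        show ([a * i + b] : Idx) = [] ++ [a * i + b] from rfl, harm_end,
        harm_nil_left, harm_nil_left, eA_single, eA_single,
        smul_add, smul_add, map_smul]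
      have hui : u i = (-1 : ℚ) ^ i •
          Finsupp.single ((List.replicate (n - i) a ++ [a]) ++ [a * i + b]) 1 := by
        rw [hu]; simp only [h1, List.replicate_succ']
      have hui1 : u (i + 1) = -((-1 : ℚ) ^ i •
          Finsupp.single (List.replicate (n - i) a ++ [a * i + b + a]) 1) := by
        rw [hu]
        simp only []
        rw [show n + 1 - (i + 1) = n - i from by omega,
          show a * (i + 1) + b = a * i + b + a from by ring,
          pow_succ, mul_neg_one, neg_smul]
      rw [hui, hui1, sub_neg_eq_add]
      abel
    have rhs_eq : (∑ i ∈ Finset.range (n + 1 + 1),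
          (-1 : ℚ) ^ i • harm [a * i + b] (List.replicate (n + 1 - i) a))
        = u 0 + eA a (∑ i ∈ Finset.range (n + 1),
            (-1 : ℚ) ^ i • harm [a * i + b] (List.replicate (n - i) a)) := by
      rw [Finset.sum_range_succ
          (fun i => (-1 : ℚ) ^ i • harm [a * i + b] (List.replicate (n + 1 - i) a)) (n + 1),
        Finset.sum_congr rfl expand, Finset.sum_add_distrib, Finset.sum_sub_distrib,
        ← map_sum]
      have hlast : (-1 : ℚ) ^ (n + 1) •
          harm [a * (n + 1) + b] (List.replicate (n + 1 - (n + 1)) a) = u (n + 1) := by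
        simp [hu, harm_nil_right]
      rw [hlast]
      have htel : (∑ i ∈ Finset.range (n + 1), u (i + 1))
          = ((∑ i ∈ Finset.range (n + 1), u i) + u (n + 1)) - u 0 := by
        rw [eq_sub_iff_add_eq]
        exact (Finset.sum_range_succ' u (n + 1)).symm.trans (Finset.sum_range_succ u (n + 1))
      rw [htel]
      abel
    rw [key, ih, rhs_eq]
lemma tri {M : Type*} [AddCommMonoid M] (N : ℕ) (f : ℕ → ℕ → M) :
    ∑ i ∈ Finset.range N, ∑ j ∈ Finset.range (N - i), f i j
      = ∑ s ∈ Finset.range N, ∑ i ∈ Finset.range (s + 1), f i (s - i) := by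
  induction N with
  | zero => simp
  | succ N ih =>
    rw [Finset.sum_range_succ (fun i => ∑ j ∈ Finset.range (N + 1 - i), f i j) N,
      Finset.sum_congr rfl (fun i hi => by
        have : N + 1 - i = (N - i) + 1 := by
          have := Finset.mem_range.mp hi; omega
        rw [this, Finset.sum_range_succ]),
      Finset.sum_add_distrib, ih,
      Finset.sum_range_succ (fun s => ∑ i ∈ Finset.range (s + 1), f i (s - i)) N,
      Finset.sum_range_succ (fun i => f i (N - i)) N]
    simp only [Nat.sub_self, Nat.add_sub_cancel_left, Finset.sum_range_one]
    abel
lemma harm_pair_end (x y c : ℕ) (l : Idx) :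
    harm [x, y] (l ++ [c])
      = eA y (harm [x] (l ++ [c])) + eA c (harm [x, y] l) + eA (y + c) (harm [x] l) := by
  simpa using harm_end [x] l y c

lemma sh_pair_rep_s (a b n : ℕ) :
    sh [b, b] (List.replicate n a)
      = ∑ s ∈ Finset.range (n + 1), (-1 : ℚ) ^ s •
          ∑ i ∈ Finset.range (s + 1),
            harm [a * i + b, a * (s - i) + b] (List.replicate (n - s) a) := by
  induction n with
  | zero => simp [sh_nil_right, harm_nil_right]
  | succ n ih =>
    set v : ℕ → Ical := fun s => (-1 : ℚ) ^ s •
      ∑ i ∈ Finset.range (s + 1),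
        eA (a * (s - i) + b) (harm [a * i + b] (List.replicate (n + 1 - s) a)) with hv
    have key : sh [b, b] (List.replicate (n + 1) a)
        = eA b (sh [b] (List.replicate (n + 1) a)) + eA a (sh [b, b] (List.replicate n a)) := by
      conv_lhs => rw [List.replicate_succ']
      rw [show ([b, b] : Idx) = [b] ++ [b] from rfl, sh_end, ← List.replicate_succ']
    have expand : ∀ s ∈ Finset.range (n + 1),
        ((-1 : ℚ) ^ s • ∑ i ∈ Finset.range (s + 1),
            harm [a * i + b, a * (s - i) + b] (List.replicate (n + 1 - s) a))
          = (v s - v (s + 1))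
            + (-1 : ℚ) ^ (s + 1) • eA b (harm [a * (s + 1) + b] (List.replicate (n - s) a))
            + eA a ((-1 : ℚ) ^ s • ∑ i ∈ Finset.range (s + 1),
                harm [a * i + b, a * (s - i) + b] (List.replicate (n - s) a)) := by
      intro s hs
      have hsn : s ≤ n := Nat.lt_succ_iff.mp (Finset.mem_range.mp hs)
      have h1 : n + 1 - s = (n - s) + 1 := by omega
      conv_lhs => rw [h1, List.replicate_succ']
      rw [Finset.sum_congr rfl (fun i hi =>
        harm_pair_end (a * i + b) (a * (s - i) + b) a (List.replicate (n - s) a)),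
        Finset.sum_add_distrib, Finset.sum_add_distrib, smul_add, smul_add]
      have hP1 : ((-1 : ℚ) ^ s • ∑ i ∈ Finset.range (s + 1),
          eA (a * (s - i) + b) (harm [a * i + b] (List.replicate (n - s) a ++ [a]))) = v s := by
        rw [hv, ← List.replicate_succ', ← h1]
      have hP2 : ((-1 : ℚ) ^ s • ∑ i ∈ Finset.range (s + 1),
          eA a (harm [a * i + b, a * (s - i) + b] (List.replicate (n - s) a)))
          = eA a ((-1 : ℚ) ^ s • ∑ i ∈ Finset.range (s + 1),
              harm [a * i + b, a * (s - i) + b] (List.replicate (n - s) a)) := by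
        rw [map_smul, map_sum]
      have hP3 : ((-1 : ℚ) ^ s • ∑ i ∈ Finset.range (s + 1),
          eA (a * (s - i) + b + a) (harm [a * i + b] (List.replicate (n - s) a)))
          = -(v (s + 1))
            + (-1 : ℚ) ^ (s + 1) • eA b (harm [a * (s + 1) + b] (List.replicate (n - s) a)) := by
        have hv1 : v (s + 1) = (-1 : ℚ) ^ (s + 1) •
            ((∑ i ∈ Finset.range (s + 1),
              eA (a * (s - i) + b + a) (harm [a * i + b] (List.replicate (n - s) a)))
              + eA b (harm [a * (s + 1) + b] (List.replicate (n - s) a))) := by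
          rw [hv]
          simp only []
          rw [show n + 1 - (s + 1) = n - s from by omega, Finset.sum_range_succ,
            Nat.sub_self, Nat.mul_zero, Nat.zero_add]
          congr 2
          refine Finset.sum_congr rfl (fun i hi => ?_)
          have his : i ≤ s := Nat.lt_succ_iff.mp (Finset.mem_range.mp hi)
          rw [show s + 1 - i = (s - i) + 1 from by omega, Nat.mul_succ,
            show a * (s - i) + a + b = a * (s - i) + b + a from by ring]
        rw [hv1, pow_succ, mul_neg_one, neg_smul, neg_smul, neg_neg, smul_add]
        abel
      rw [hP1, hP2, hP3]
      abel
    have hD : ((-1 : ℚ) ^ (n + 1) • ∑ i ∈ Finset.range (n + 1 + 1),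
        harm [a * i + b, a * (n + 1 - i) + b] (List.replicate (n + 1 - (n + 1)) a))
        = v (n + 1) := by
      rw [hv]
      simp only []
      congr 1
      refine Finset.sum_congr rfl (fun i hi => ?_)
      rw [Nat.sub_self, List.replicate_zero, harm_nil_right, harm_nil_right, eA_single,
        List.singleton_append]
    have htel : (∑ s ∈ Finset.range (n + 1), v (s + 1))
        = ((∑ s ∈ Finset.range (n + 1), v s) + v (n + 1)) - v 0 := by
      rw [eq_sub_iff_add_eq]
      exact (Finset.sum_range_succ' v (n + 1)).symm.trans (Finset.sum_range_succ v (n + 1))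
    have hW : (v 0 + ∑ s ∈ Finset.range (n + 1),
        (-1 : ℚ) ^ (s + 1) • eA b (harm [a * (s + 1) + b] (List.replicate (n - s) a)))
        = eA b (sh [b] (List.replicate (n + 1) a)) := by
      rw [sh_single_rep a b (n + 1), map_sum,
        Finset.sum_range_succ' (fun i => eA b ((-1 : ℚ) ^ i • harm [a * i + b]
          (List.replicate (n + 1 - i) a))) (n + 1)]
      have e1 : v 0 = eA b ((-1 : ℚ) ^ 0 • harm [a * 0 + b]
          (List.replicate (n + 1 - 0) a)) := by
        rw [hv]
        simp only [pow_zero, one_smul, Finset.sum_range_one, Nat.sub_self, Nat.mul_zero,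
          Nat.zero_add, Nat.sub_zero]
      have e2 : (∑ s ∈ Finset.range (n + 1),
          (-1 : ℚ) ^ (s + 1) • eA b (harm [a * (s + 1) + b] (List.replicate (n - s) a)))
          = ∑ s ∈ Finset.range (n + 1),
            eA b ((-1 : ℚ) ^ (s + 1) • harm [a * (s + 1) + b]
              (List.replicate (n + 1 - (s + 1)) a)) := by
        refine Finset.sum_congr rfl (fun s hs => ?_)
        rw [map_smul, Nat.succ_sub_succ]
      rw [e2, e1]
      exact add_comm _ _
    have hmap : (∑ s ∈ Finset.range (n + 1),
        eA a ((-1 : ℚ) ^ s • ∑ i ∈ Finset.range (s + 1),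
          harm [a * i + b, a * (s - i) + b] (List.replicate (n - s) a)))
        = eA a (∑ s ∈ Finset.range (n + 1), (-1 : ℚ) ^ s •
            ∑ i ∈ Finset.range (s + 1),
              harm [a * i + b, a * (s - i) + b] (List.replicate (n - s) a)) :=
      (map_sum _ _ _).symm
    rw [Finset.sum_range_succ (fun s => (-1 : ℚ) ^ s •
        ∑ i ∈ Finset.range (s + 1),
          harm [a * i + b, a * (s - i) + b] (List.replicate (n + 1 - s) a)) (n + 1),
      Finset.sum_congr rfl expand, Finset.sum_add_distrib, Finset.sum_add_distrib,
      Finset.sum_sub_distrib, hD, htel, hmap, key, ih, ← hW]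
    abel

/-- (b,b) ⧢̃ ({a}ⁿ) = ∑_{i+j≤n} (-1)^{i+j} (ai+b, aj+b) * ({a}^{n-i-j}). -/
theorem sh_pair_replicate (n a b : ℕ) (ha : 0 < a) (hb : 0 < b) :
    sh [b, b] (List.replicate n a)
      = ∑ i ∈ Finset.range (n + 1), ∑ j ∈ Finset.range (n + 1 - i),
          ((-1 : ℚ)) ^ (i + j) •
            harm [a * i + b, a * j + b] (List.replicate (n - i - j) a) := by
  rw [sh_pair_rep_s, tri (n + 1) (fun i j => (-1 : ℚ) ^ (i + j) •
      harm [a * i + b, a * j + b] (List.replicate (n - i - j) a))]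
  refine Finset.sum_congr rfl (fun s hs => ?_)
  rw [Finset.smul_sum]
  refine Finset.sum_congr rfl (fun i hi => ?_)
  have his : i ≤ s := Nat.lt_succ_iff.mp (Finset.mem_range.mp hi)
  rw [show i + (s - i) = s from by omega, show n - i - (s - i) = n - s from by omega]
end

section
/- For positive integers k and n, one has σ_2({k}^n) = (k(k+1)/2) ∑_{i=0}^{n-1} (-1)^i (k(i+1)+2) * ({k}^{n-i-1}) + k^2 ∑_{i,j≥0, i+j≤n-2} (-1)^{i+j} (k(i+1)+1, k(j+1)+1) * ({k}^{n-i-j-2}) in 𝓘. -/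
lemma sigma_zero (l : Idx) : sigma 0 l = Finsupp.single l 1 := by
  induction l with
  | nil => simp [sigma]
  | cons a l ih => simp [sigma, ih, Finsupp.mapDomain_single]

lemma sigma_one (k n : ℕ) :
    sigma 1 (List.replicate n k) =
      (k:ℚ) • ∑ p ∈ Finset.range n,
        Finsupp.single (List.replicate p k ++ (k+1) :: List.replicate (n-1-p) k) (1:ℚ) := by
  induction n with
  | zero => simp [sigma]
  | succ n ih =>
    rw [List.replicate_succ]
    simp only [sigma]
    rw [Finset.sum_range_succ, Finset.sum_range_one]
    rw [ih, sigma_zero]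
    simp only [Nat.add_zero, Nat.choose_zero_right, Nat.add_sub_cancel, Nat.choose_one_right,
      Nat.sub_zero, Nat.sub_self, Nat.cast_one, one_smul]
    rw [Finsupp.mapDomain_smul, Finsupp.mapDomain_finset_sum, Finsupp.mapDomain_single]
    rw [Finset.sum_range_succ', smul_add]
    congr 1
    · congr 1
      apply Finset.sum_congr rfl
      intro p hp
      rw [Finsupp.mapDomain_single]
      congr 1
      rw [show n - (p+1) = n - 1 - p by omega, ← List.cons_append, ← List.replicate_succ]

lemma sigma_two (k n : ℕ) :
    sigma 2 (List.replicate n k) =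
      (((k+1).choose 2 : ℕ) : ℚ) • (∑ p ∈ Finset.range n,
          Finsupp.single (List.replicate p k ++ (k+2) :: List.replicate (n-1-p) k) (1:ℚ))
      + ((k:ℚ)^2) • (∑ p ∈ Finset.range (n-1), ∑ s ∈ Finset.range (n-1-p),
          Finsupp.single (List.replicate p k ++ (k+1) ::
            (List.replicate (n-2-p-s) k ++ (k+1) :: List.replicate s k)) (1:ℚ)) := by
  induction n with
  | zero => simp [sigma]
  | succ n ih =>
    rw [List.replicate_succ]
    simp only [sigma]
    rw [Finset.sum_range_succ, Finset.sum_range_succ, Finset.sum_range_one]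
    rw [ih, sigma_one, sigma_zero]
    simp only [Nat.add_zero, Nat.choose_zero_right, Nat.add_sub_cancel, Nat.choose_one_right,
      Nat.sub_zero, Nat.sub_self, Nat.cast_one, one_smul]
    rcases n with _ | m
    · simp [sigma]
    · -- rewrite RHS first sum
      have e1 : ∑ x ∈ Finset.range (m+1+1),
            (Finsupp.single (List.replicate x k ++ (k+2) :: List.replicate (m+1-x) k) (1:ℚ) : Ical)
          = (∑ p ∈ Finset.range (m+1),
              Finsupp.single (k :: (List.replicate p k ++ (k+2) :: List.replicate (m-p) k)) (1:ℚ))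
            + Finsupp.single ((k+2) :: List.replicate (m+1) k) (1:ℚ) := by
        rw [Finset.sum_range_succ']
        congr 1
        · apply Finset.sum_congr rfl
          intro p hp
          rw [show m+1-(p+1) = m-p from by omega, List.replicate_succ, List.cons_append]
      have e2 : ∑ x ∈ Finset.range (m+1), ∑ s ∈ Finset.range (m+1-x),
            (Finsupp.single (List.replicate x k ++ (k+1) ::
              (List.replicate (m+1+1-2-x-s) k ++ (k+1) :: List.replicate s k)) (1:ℚ) : Ical)
          = (∑ p ∈ Finset.range m, ∑ s ∈ Finset.range (m-p),
              Finsupp.single (k :: (List.replicate p k ++ (k+1) ::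
                (List.replicate (m-1-p-s) k ++ (k+1) :: List.replicate s k))) (1:ℚ))
            + ∑ p ∈ Finset.range (m+1),
              Finsupp.single ((k+1) :: (List.replicate p k ++ (k+1) :: List.replicate (m-p) k)) (1:ℚ) := by
        rw [Finset.sum_range_succ']
        congr 1
        · apply Finset.sum_congr rfl
          intro p hp
          rw [show m+1-(p+1) = m-p from by omega]
          apply Finset.sum_congr rfl
          intro s hs
          rw [show m+1+1-2-(p+1)-s = m-1-p-s from by omega, List.replicate_succ, List.cons_append]
        · rw [← Finset.sum_range_reflect
            (fun p => (Finsupp.single ((k+1) :: (List.replicate p k ++ (k+1) :: List.replicate (m-p) k)) (1:ℚ) : Ical)) (m+1)]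
          apply Finset.sum_congr rfl
          intro s hs
          simp only [Finset.mem_range] at hs
          rw [show m+1+1-2-0-s = m-s from by omega, show m+1-1-s = m-s from by omega,
            show m-(m-s) = s from by omega]
          simp
      rw [e1, e2, show (k+2-1).choose 2 = (k+1).choose 2 from rfl]
      simp only [Finsupp.mapDomain_add, Finsupp.mapDomain_smul, Finsupp.mapDomain_finset_sum,
        Finsupp.mapDomain_single, smul_smul, Nat.add_sub_cancel,
        show m+1-2 = m-1 from rfl, ← pow_two]
      module

lemma harmAux_nil (l : Idx) : harmAux [] l = Finsupp.single l 1 := by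
  rw [harmAux]

lemma mapDomain_reverse_cons (x : ℕ) (v : Ical) :
    Finsupp.mapDomain List.reverse (Finsupp.mapDomain (x :: ·) v)
      = Finsupp.mapDomain (· ++ [x]) (Finsupp.mapDomain List.reverse v) := by
  rw [← Finsupp.mapDomain_comp, ← Finsupp.mapDomain_comp]
  congr 1
  funext l
  simp

lemma harm_single_zero (c : ℕ) : harm [c] [] = Finsupp.single [c] 1 := by
  simp [harm, harmAux, Finsupp.mapDomain_single]

lemma harm_pair_zero (a b : ℕ) : harm [a, b] [] = Finsupp.single [a, b] 1 := by
  simp [harm, harmAux, Finsupp.mapDomain_single]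

lemma harm_single_succ (k c m : ℕ) :
    harm [c] (List.replicate (m+1) k)
      = Finsupp.single (List.replicate (m+1) k ++ [c]) 1
        + Finsupp.mapDomain (· ++ [k]) (harm [c] (List.replicate m k))
        + Finsupp.single (List.replicate m k ++ [c+k]) 1 := by
  have h1 : harm [c] (List.replicate (m+1) k)
      = Finsupp.mapDomain List.reverse (harmAux [c] (k :: List.replicate m k)) := by
    rw [harm, List.reverse_replicate, List.reverse_singleton, List.replicate_succ]
  rw [h1, harmAux]
  rw [Finsupp.mapDomain_add, Finsupp.mapDomain_add]
  rw [mapDomain_reverse_cons, mapDomain_reverse_cons, mapDomain_reverse_cons]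
  rw [harmAux_nil, harmAux_nil]
  have h2 : Finsupp.mapDomain List.reverse (harmAux [c] (List.replicate m k))
      = harm [c] (List.replicate m k) := by
    rw [harm, List.reverse_replicate, List.reverse_singleton]
  rw [h2]
  simp [Finsupp.mapDomain_single, List.replicate_succ', List.reverse_replicate]


lemma harm_pair_succ (k a b m : ℕ) :
    harm [a, b] (List.replicate (m+1) k)
      = Finsupp.mapDomain (· ++ [b]) (harm [a] (List.replicate (m+1) k))
        + Finsupp.mapDomain (· ++ [k]) (harm [a, b] (List.replicate m k))
        + Finsupp.mapDomain (· ++ [b+k]) (harm [a] (List.replicate m k)) := by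
  have h1 : harm [a, b] (List.replicate (m+1) k)
      = Finsupp.mapDomain List.reverse (harmAux [b, a] (k :: List.replicate m k)) := by
    rw [harm, List.reverse_replicate, show ([a,b]:Idx).reverse = [b,a] from rfl,
      List.replicate_succ]
  rw [h1, harmAux]
  rw [Finsupp.mapDomain_add, Finsupp.mapDomain_add,
    mapDomain_reverse_cons, mapDomain_reverse_cons, mapDomain_reverse_cons]
  have h2 : Finsupp.mapDomain List.reverse (harmAux [a] (k :: List.replicate m k))
      = harm [a] (List.replicate (m+1) k) := by
    rw [harm, List.reverse_replicate, List.reverse_singleton, List.replicate_succ]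
  have h3 : Finsupp.mapDomain List.reverse (harmAux [b, a] (List.replicate m k))
      = harm [a, b] (List.replicate m k) := by
    rw [harm, List.reverse_replicate, show ([a,b]:Idx).reverse = [b,a] from rfl]
  have h4 : Finsupp.mapDomain List.reverse (harmAux [a] (List.replicate m k))
      = harm [a] (List.replicate m k) := by
    rw [harm, List.reverse_replicate, List.reverse_singleton]
  rw [h2, h3, h4]

lemma harm_single_rep (k c m : ℕ) :
    harm [c] (List.replicate m k)
      = (∑ p ∈ Finset.range (m+1),
          Finsupp.single (List.replicate p k ++ c :: List.replicate (m-p) k) (1:ℚ))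
        + ∑ p ∈ Finset.range m,
          Finsupp.single (List.replicate p k ++ (c+k) :: List.replicate (m-1-p) k) (1:ℚ) := by
  induction m with
  | zero => simp [harm_single_zero]
  | succ m ih =>
    rw [harm_single_succ, ih]
    rw [Finsupp.mapDomain_add, Finsupp.mapDomain_finset_sum, Finsupp.mapDomain_finset_sum]
    have eA : ∀ p ∈ Finset.range (m+1),
        Finsupp.mapDomain (· ++ [k])
          (Finsupp.single (List.replicate p k ++ c :: List.replicate (m-p) k) (1:ℚ))
        = Finsupp.single (List.replicate p k ++ c :: List.replicate (m+1-p) k) (1:ℚ) := by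
      intro p hp
      simp only [Finset.mem_range] at hp
      rw [Finsupp.mapDomain_single]
      congr 1
      rw [show m+1-p = (m-p)+1 from by omega, List.replicate_succ']
      simp
    have eB : ∀ p ∈ Finset.range m,
        Finsupp.mapDomain (· ++ [k])
          (Finsupp.single (List.replicate p k ++ (c+k) :: List.replicate (m-1-p) k) (1:ℚ))
        = Finsupp.single (List.replicate p k ++ (c+k) :: List.replicate (m-p) k) (1:ℚ) := by
      intro p hp
      simp only [Finset.mem_range] at hp
      rw [Finsupp.mapDomain_single]
      congr 1
      rw [show m-p = (m-1-p)+1 from by omega, List.replicate_succ']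
      simp
    rw [Finset.sum_congr rfl eA, Finset.sum_congr rfl eB]
    simp only [Nat.add_sub_cancel]
    rw [Finset.sum_range_succ
        (f := fun x => (Finsupp.single (List.replicate x k ++ c :: List.replicate (m+1-x) k) (1:ℚ) : Ical)) (n := m+1),
      Finset.sum_range_succ
        (f := fun x => (Finsupp.single (List.replicate x k ++ (c+k) :: List.replicate (m-x) k) (1:ℚ) : Ical)) (n := m)]
    simp only [Nat.sub_self, List.replicate_zero]
    abel

lemma T_lemma (k c n : ℕ) :
    ∑ i ∈ Finset.range n, ((-1:ℚ))^i • harm [c + i*k] (List.replicate (n-1-i) k)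
      = ∑ p ∈ Finset.range n,
          Finsupp.single (List.replicate p k ++ c :: List.replicate (n-1-p) k) (1:ℚ) := by
  induction n generalizing c with
  | zero => simp
  | succ n ih =>
    rw [Finset.sum_range_succ']
    have e0 : ∀ i ∈ Finset.range n,
        ((-1:ℚ))^(i+1) • harm [c + (i+1)*k] (List.replicate (n+1-1-(i+1)) k)
          = -(((-1:ℚ))^i • harm [(c+k) + i*k] (List.replicate (n-1-i) k)) := by
      intro i hi
      rw [show n+1-1-(i+1) = n-1-i from by omega, show c+(i+1)*k = (c+k)+i*k from by ring,
        pow_succ, mul_comm ((-1:ℚ)^i) (-1), neg_one_mul, neg_smul]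
    rw [Finset.sum_congr rfl e0, Finset.sum_neg_distrib, ih (c+k)]
    simp only [pow_zero, one_smul, Nat.zero_mul, Nat.add_zero, Nat.add_sub_cancel, Nat.sub_zero]
    rw [harm_single_rep k c n]
    abel

noncomputable def V (k a b n : ℕ) : Ical :=
  ∑ m ∈ Finset.range n,
    Finsupp.mapDomain (· ++ b :: List.replicate (n-1-m) k) (harm [a] (List.replicate m k))

lemma G_lemma (k a b n : ℕ) :
    harm [a, b] (List.replicate n k) = V k a b (n+1) + V k a (b+k) n := by
  induction n generalizing b with
  | zero =>
    simp [harm_pair_zero, harm_single_zero, V, Finsupp.mapDomain_single]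
  | succ n ih =>
    rw [harm_pair_succ, ih]
    have expand : ∀ b' n' : ℕ, V k a b' (n'+1)
        = Finsupp.mapDomain (· ++ [b']) (harm [a] (List.replicate n' k))
          + Finsupp.mapDomain (· ++ [k]) (V k a b' n') := by
      intro b' n'
      rw [V, Finset.sum_range_succ]
      simp only [Nat.add_sub_cancel, Nat.sub_self, List.replicate_zero]
      rw [V, Finsupp.mapDomain_finset_sum, add_comm]
      congr 1
      apply Finset.sum_congr rfl
      intro m hm
      simp only [Finset.mem_range] at hm
      rw [← Finsupp.mapDomain_comp]
      congr 1
      funext l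
      simp only [Function.comp_apply, List.append_assoc, List.cons_append]
      rw [show n'-m = (n'-1-m)+1 from by omega, List.replicate_succ']
    rw [expand b (n+1), expand b n, expand (b+k) n, Finsupp.mapDomain_add]
    abel

lemma U_lemma (k a b n : ℕ) :
    ∑ j ∈ Finset.range n, ((-1:ℚ))^j • harm [a, b + j*k] (List.replicate (n-1-j) k)
      = V k a b n := by
  induction n generalizing b with
  | zero => simp [V]
  | succ n ih =>
    rw [Finset.sum_range_succ']
    have e0 : ∀ j ∈ Finset.range n,
        ((-1:ℚ))^(j+1) • harm [a, b + (j+1)*k] (List.replicate (n+1-1-(j+1)) k)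
          = -(((-1:ℚ))^j • harm [a, (b+k) + j*k] (List.replicate (n-1-j) k)) := by
      intro j hj
      rw [show n+1-1-(j+1) = n-1-j from by omega, show b+(j+1)*k = (b+k)+j*k from by ring,
        pow_succ, mul_comm ((-1:ℚ)^j) (-1), neg_one_mul, neg_smul]
    rw [Finset.sum_congr rfl e0, Finset.sum_neg_distrib, ih (b+k)]
    simp only [pow_zero, one_smul, Nat.zero_mul, Nat.add_zero, Nat.add_sub_cancel, Nat.sub_zero]
    rw [G_lemma]
    abel

lemma tri_swap {M : Type*} [AddCommMonoid M] (N : ℕ) (f : ℕ → ℕ → M) :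
    ∑ i ∈ Finset.range N, ∑ j ∈ Finset.range (N - i), f i j
      = ∑ j ∈ Finset.range N, ∑ i ∈ Finset.range (N - j), f i j :=
  Finset.sum_comm' (by intro x y; simp only [Finset.mem_range]; omega)

lemma tri_reindex {M : Type*} [AddCommMonoid M] (N : ℕ) (f : ℕ → ℕ → M) :
    ∑ i ∈ Finset.range N, ∑ m ∈ Finset.range (N - i), f i m
      = ∑ s ∈ Finset.range N, ∑ i ∈ Finset.range (N - s), f i (N - 1 - s - i) := by
  have h1 : ∀ i ∈ Finset.range N, ∑ m ∈ Finset.range (N - i), f i m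
      = ∑ s ∈ Finset.range (N - i), f i (N - 1 - i - s) := by
    intro i hi
    rw [← Finset.sum_range_reflect]
    apply Finset.sum_congr rfl
    intro s hs
    simp only [Finset.mem_range] at hs
    congr 1
    omega
  rw [Finset.sum_congr rfl h1, tri_swap]
  apply Finset.sum_congr rfl
  intro s hs
  apply Finset.sum_congr rfl
  intro i hi
  congr 1
  omega

lemma choose_two_cast (k : ℕ) : (((k+1).choose 2 : ℕ) : ℚ) = (k:ℚ) * ((k:ℚ)+1) / 2 := by
  rw [Nat.choose_two_right, Nat.add_sub_cancel, Nat.mul_comm]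
  rw [Nat.cast_div (Nat.even_mul_succ_self k).two_dvd (by norm_num)]
  push_cast; ring

/-- σ₂({k}ⁿ) = (k(k+1)/2) ∑_{i=0}^{n-1} (-1)ⁱ (k(i+1)+2)*({k}^{n-i-1})
 + k² ∑_{i+j≤n-2} (-1)^{i+j} (k(i+1)+1, k(j+1)+1)*({k}^{n-i-j-2}). -/
theorem sigma2_replicate (k n : ℕ) (hk : 0 < k) (hn : 0 < n) :
    sigma 2 (List.replicate n k)
      = ((k : ℚ) * (k + 1) / 2) •
          (∑ i ∈ Finset.range n,
            ((-1 : ℚ)) ^ i • harm [k * (i + 1) + 2] (List.replicate (n - i - 1) k))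
        + ((k : ℚ) ^ 2) •
          (∑ i ∈ Finset.range (n - 1), ∑ j ∈ Finset.range (n - 1 - i),
            ((-1 : ℚ)) ^ (i + j) •
              harm [k * (i + 1) + 1, k * (j + 1) + 1]
                (List.replicate (n - i - j - 2) k)) := by

  have h1 : (∑ i ∈ Finset.range n,
        ((-1:ℚ))^i • harm [k*(i+1)+2] (List.replicate (n-i-1) k))
      = ∑ p ∈ Finset.range n,
          Finsupp.single (List.replicate p k ++ (k+2) :: List.replicate (n-1-p) k) (1:ℚ) := by
    rw [← T_lemma k (k+2) n]
    apply Finset.sum_congr rfl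
    intro i hi
    rw [show k*(i+1)+2 = k+2+i*k from by ring, show n-i-1 = n-1-i from by omega]
  have h2 : (∑ i ∈ Finset.range (n-1), ∑ j ∈ Finset.range (n-1-i), ((-1:ℚ))^(i+j) •
        harm [k*(i+1)+1, k*(j+1)+1] (List.replicate (n-i-j-2) k))
      = ∑ p ∈ Finset.range (n-1), ∑ s ∈ Finset.range (n-1-p),
          Finsupp.single (List.replicate p k ++ (k+1) ::
            (List.replicate (n-2-p-s) k ++ (k+1) :: List.replicate s k)) (1:ℚ) := by
    have hA : ∀ i ∈ Finset.range (n-1),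
        ∑ j ∈ Finset.range (n-1-i), ((-1:ℚ))^(i+j) •
            harm [k*(i+1)+1, k*(j+1)+1] (List.replicate (n-i-j-2) k)
        = ∑ m ∈ Finset.range (n-1-i), ((-1:ℚ))^i •
            Finsupp.mapDomain (· ++ (k+1) :: List.replicate (n-2-i-m) k)
              (harm [k+1+i*k] (List.replicate m k)) := by
      intro i hi
      simp only [Finset.mem_range] at hi
      have step : ∑ j ∈ Finset.range (n-1-i), ((-1:ℚ))^(i+j) •
            harm [k*(i+1)+1, k*(j+1)+1] (List.replicate (n-i-j-2) k)
          = ((-1:ℚ))^i • ∑ j ∈ Finset.range (n-1-i), ((-1:ℚ))^j •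
              harm [k+1+i*k, (k+1) + j*k] (List.replicate ((n-1-i)-1-j) k) := by
        rw [Finset.smul_sum]
        apply Finset.sum_congr rfl
        intro j hj
        rw [smul_smul, ← pow_add]
        rw [show k*(i+1)+1 = k+1+i*k from by ring, show k*(j+1)+1 = (k+1)+j*k from by ring,
          show n-i-j-2 = (n-1-i)-1-j from by omega]
      rw [step, U_lemma, V, Finset.smul_sum]
      apply Finset.sum_congr rfl
      intro m hm
      simp only [Finset.mem_range] at hm
      rw [show (n-1-i)-1-m = n-2-i-m from by omega]
    rw [Finset.sum_congr rfl hA]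
    rw [tri_reindex (n-1) (fun i m => ((-1:ℚ))^i •
      Finsupp.mapDomain (· ++ (k+1) :: List.replicate (n-2-i-m) k)
        (harm [k+1+i*k] (List.replicate m k)))]
    have hC : ∀ s ∈ Finset.range (n-1),
        (∑ i ∈ Finset.range (n-1-s), ((-1:ℚ))^i •
          Finsupp.mapDomain (· ++ (k+1) :: List.replicate (n-2-i-(n-1-1-s-i)) k)
            (harm [k+1+i*k] (List.replicate (n-1-1-s-i) k)))
        = ∑ p ∈ Finset.range (n-1-s),
            Finsupp.single (List.replicate p k ++ (k+1) ::
              (List.replicate (n-2-s-p) k ++ (k+1) :: List.replicate s k)) (1:ℚ) := by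
      intro s hs
      simp only [Finset.mem_range] at hs
      have hB : ∀ i ∈ Finset.range (n-1-s),
          ((-1:ℚ))^i • Finsupp.mapDomain (· ++ (k+1) :: List.replicate (n-2-i-(n-1-1-s-i)) k)
              (harm [k+1+i*k] (List.replicate (n-1-1-s-i) k))
          = Finsupp.mapDomain (· ++ (k+1) :: List.replicate s k)
              (((-1:ℚ))^i • harm [(k+1)+i*k] (List.replicate ((n-1-s)-1-i) k)) := by
        intro i hi
        simp only [Finset.mem_range] at hi
        rw [Finsupp.mapDomain_smul]
        rw [show n-2-i-(n-1-1-s-i) = s from by omega,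
          show n-1-1-s-i = (n-1-s)-1-i from by omega]
      rw [Finset.sum_congr rfl hB, ← Finsupp.mapDomain_finset_sum, T_lemma k (k+1) (n-1-s)]
      rw [Finsupp.mapDomain_finset_sum]
      apply Finset.sum_congr rfl
      intro p hp
      simp only [Finset.mem_range] at hp
      rw [Finsupp.mapDomain_single]
      congr 1
      rw [show (n-1-s)-1-p = n-2-s-p from by omega]
      simp only [List.append_assoc, List.cons_append]
    rw [Finset.sum_congr rfl hC]
    rw [tri_swap (n-1) (fun s p => Finsupp.single (List.replicate p k ++ (k+1) ::
        (List.replicate (n-2-s-p) k ++ (k+1) :: List.replicate s k)) (1:ℚ))]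
    apply Finset.sum_congr rfl
    intro p hp
    apply Finset.sum_congr rfl
    intro s hs
    rw [show n-2-s-p = n-2-p-s from by omega]
  rw [sigma_two k n, choose_two_cast, h1, h2]
end
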